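/- Let V₁ →A V₂ →B V₃ be continuous linear maps between locally convex Hausdorff topological vector spaces with B ∘ A = 0. Then Im(A) is dense in Ker(B) if and only if Im(Bᵗ) is weak-* dense in Ker(Aᵗ). -/

import Mathlib

/-- A real number `t` with `c * t < u` for all `c` must be zero. -/
lemma aux_smul_lt {t u : ℝ} (h : ∀ c : ℝ, c * t < u) : t = 0 := by
  by_contra hne
  have h1 := h ((u + 1) / t)
  rw [div_mul_cancel₀ _ hne] at h1
  linarith

/-- Every continuous linear functional on `WeakDual ℝ V` is evaluation at a point. -/
lemma weakDual_clm_eval {V : Type*} [AddCommGroup V] [Module ℝ V] [TopologicalSpace V]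
    (F : WeakDual ℝ V →L[ℝ] ℝ) : ∃ w : V, ∀ φ : WeakDual ℝ V, F φ = φ w := by
  have hb := LinearMap.hasBasis_weakBilin (topDualPairing ℝ V)
  have hmem : F ⁻¹' (Metric.ball (0:ℝ) 1) ∈ nhds (0 : WeakDual ℝ V) := by
    have hc := F.continuous.continuousAt (x := (0 : WeakDual ℝ V))
    apply hc.preimage_mem_nhds
    rw [map_zero]
    exact Metric.ball_mem_nhds _ one_pos
  replace hmem := hb.mem_iff.1 hmem
  obtain ⟨U, hU, hUsub⟩ := hmem
  obtain ⟨s, r, hr, rfl⟩ := (SeminormFamily.basisSets_iff _).1 hU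
  have hker : ∀ φ : WeakDual ℝ V, (∀ y ∈ s, φ y = 0) → F φ = 0 := by
    intro φ hφ
    apply aux_smul_lt (u := 1)
    intro c
    have hmem2 : c • φ ∈ ((s.sup ((topDualPairing ℝ V).toSeminormFamily)).ball 0 r) := by
      refine (Seminorm.mem_ball_zero (p := s.sup ((topDualPairing ℝ V).toSeminormFamily))).2 ?_
      rcases s.eq_empty_or_nonempty with h | h
      · subst h; exact hr
      · apply Seminorm.finset_sup_apply_lt hr
        intro y hy
        have h3 : φ y = 0 := hφ y hy
        show ‖c * φ y‖ < r
        rw [h3, mul_zero, norm_zero]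
        exact hr
    have := Set.mem_preimage.1 (hUsub hmem2)
    rw [Metric.mem_ball, dist_zero_right, Real.norm_eq_abs] at this
    calc c * F φ = F (c • φ) := by rw [map_smul]; rfl
    _ ≤ |F (c • φ)| := le_abs_self _
    _ < 1 := this
  let L : s → (WeakDual ℝ V →ₗ[ℝ] ℝ) := fun y =>
    { toFun := fun φ => φ (y : V)
      map_add' := fun a b => rfl
      map_smul' := fun c a => rfl }
  have hker' : (⨅ i : s, LinearMap.ker (L i)) ≤ LinearMap.ker (F : WeakDual ℝ V →ₗ[ℝ] ℝ) := by
    intro φ hφ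
    simp only [Submodule.mem_iInf, LinearMap.mem_ker] at hφ ⊢
    exact hker φ fun y hy => hφ ⟨y, hy⟩
  obtain ⟨c, hc⟩ := (Submodule.mem_span_range_iff_exists_fun ℝ).1 (mem_span_of_iInf_ker_le_ker hker')
  refine ⟨∑ i : s, c i • (i : V), fun φ => ?_⟩
  have h1 : ∑ i : s, c i • (L i φ) = F φ := by
    have := congrArg (fun K : WeakDual ℝ V →ₗ[ℝ] ℝ => K φ) hc
    simpa using this
  rw [← h1, map_sum]
  simp [L, map_smul]; rfl

/-- A linear functional bounded above on a submodule vanishes on it. -/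
lemma aux_zero_on_submodule {E : Type*} [AddCommGroup E] [Module ℝ E] [TopologicalSpace E]
    (f : E →L[ℝ] ℝ) (p : Submodule ℝ E) {u : ℝ} (h : ∀ a ∈ p, f a < u) :
    ∀ a ∈ p, f a = 0 := by
  intro a ha
  apply aux_smul_lt (u := u)
  intro c
  have := h (c • a) (p.smul_mem c ha)
  rwa [map_smul, smul_eq_mul] at this

theorem stmt4 {V₁ V₂ V₃ : Type*}
    [AddCommGroup V₁] [Module ℝ V₁] [TopologicalSpace V₁] [IsTopologicalAddGroup V₁]
    [ContinuousSMul ℝ V₁] [LocallyConvexSpace ℝ V₁] [T2Space V₁]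
    [AddCommGroup V₂] [Module ℝ V₂] [TopologicalSpace V₂] [IsTopologicalAddGroup V₂]
    [ContinuousSMul ℝ V₂] [LocallyConvexSpace ℝ V₂] [T2Space V₂]
    [AddCommGroup V₃] [Module ℝ V₃] [TopologicalSpace V₃] [IsTopologicalAddGroup V₃]
    [ContinuousSMul ℝ V₃] [LocallyConvexSpace ℝ V₃] [T2Space V₃]
    (A : V₁ →L[ℝ] V₂) (B : V₂ →L[ℝ] V₃) (hBA : ∀ v : V₁, B (A v) = 0) :
    ({w : V₂ | B w = 0} ⊆ closure (Set.range A)) ↔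
      ({φ : WeakDual ℝ V₂ | ∀ v : V₁, φ (A v) = 0} ⊆
        closure {φ : WeakDual ℝ V₂ | ∃ ψ : V₃ →L[ℝ] ℝ, ∀ w : V₂, φ w = ψ (B w)}) := by
  -- the image of `Bᵗ` as a submodule of the weak dual
  let p : Submodule ℝ (WeakDual ℝ V₂) :=
    { carrier := {φ : WeakDual ℝ V₂ | ∃ ψ : V₃ →L[ℝ] ℝ, ∀ w : V₂, φ w = ψ (B w)}
      add_mem' := by
        rintro x y ⟨ψ₁, h1⟩ ⟨ψ₂, h2⟩
        exact ⟨ψ₁ + ψ₂, fun w => by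
          show x w + y w = ψ₁ (B w) + ψ₂ (B w)
          rw [h1, h2]⟩
      zero_mem' := ⟨0, fun w => rfl⟩
      smul_mem' := by
        rintro c x ⟨ψ, h1⟩
        exact ⟨c • ψ, fun w => by
          show c * x w = c * ψ (B w)
          rw [h1]⟩ }
  haveI : LocallyConvexSpace ℝ (WeakDual ℝ V₂) :=
    WeakBilin.locallyConvexSpace (B := topDualPairing ℝ V₂)
  haveI : IsTopologicalAddGroup (WeakDual ℝ V₂) :=
    WeakBilin.instIsTopologicalAddGroup (B := topDualPairing ℝ V₂)
  constructor
  · -- forward direction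
    intro h φ hφ
    by_contra hcl
    obtain ⟨f, u, hfu, hfφ⟩ := geometric_hahn_banach_closed_point
      (p.convex.closure) isClosed_closure hcl
    have hu : (0:ℝ) < u := by
      have := hfu 0 (subset_closure p.zero_mem)
      simpa using this
    -- f vanishes on the closure of p
    have hclosed : ∀ a ∈ closure (p : Set (WeakDual ℝ V₂)), f a = 0 := by
      have : ∀ a ∈ p.topologicalClosure, f a = 0 :=
        aux_zero_on_submodule f p.topologicalClosure (fun a ha => hfu a ha)
      exact this
    obtain ⟨w, hw⟩ := weakDual_clm_eval f
    have hBw : B w = 0 := by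
      by_contra hne
      obtain ⟨ψ, hψ⟩ := geometric_hahn_banach_point_point (Ne.symm hne : (0:V₃) ≠ B w)
      -- hψ : ψ 0 < ψ (B w)  (choose points 0 and B w)
      have hψ0 : ψ (B w) ≠ 0 := by
        rw [map_zero] at hψ; linarith
      set φ' : WeakDual ℝ V₂ := (show WeakDual ℝ V₂ from ψ.comp B) with hφ'
      have hmem : φ' ∈ (p : Set (WeakDual ℝ V₂)) := ⟨ψ, fun w' => rfl⟩
      have h0 : f φ' = 0 := hclosed φ' (subset_closure hmem)
      rw [hw φ'] at h0
      exact hψ0 h0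
    have hwcl : w ∈ closure (Set.range A) := h hBw
    have hφw : φ w = 0 := by
      have hsub : Set.range (A : V₁ → V₂) ⊆ {x : V₂ | (show V₂ →L[ℝ] ℝ from φ) x = 0} := by
        rintro _ ⟨v, rfl⟩
        exact hφ v
      have hcl2 : IsClosed {x : V₂ | (show V₂ →L[ℝ] ℝ from φ) x = 0} :=
        isClosed_eq (show V₂ →L[ℝ] ℝ from φ).continuous continuous_const
      exact closure_minimal hsub hcl2 hwcl
    rw [hw φ, hφw] at hfφ
    linarith
  · -- backward direction
    intro h w hw
    by_contra hcl
    have hconv : Convex ℝ (Set.range (A : V₁ → V₂)) := by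
      rintro _ ⟨v₁, rfl⟩ _ ⟨v₂, rfl⟩ a b _ _ _
      exact ⟨a • v₁ + b • v₂, by simp [map_add, map_smul]⟩
    obtain ⟨f, u, hfu, hfw⟩ := geometric_hahn_banach_closed_point
      hconv.closure isClosed_closure hcl
    have hu : (0:ℝ) < u := by
      have := hfu (A 0) (subset_closure ⟨0, rfl⟩)
      simpa using this
    have hfA : ∀ v : V₁, f (A v) = 0 := by
      intro v
      apply aux_smul_lt (u := u)
      intro c
      have : f (A (c • v)) < u := hfu _ (subset_closure ⟨c • v, rfl⟩)
      rwa [map_smul, map_smul, smul_eq_mul] at this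
    set g : WeakDual ℝ V₂ := (show WeakDual ℝ V₂ from f) with hg
    have hgmem : g ∈ {φ : WeakDual ℝ V₂ | ∀ v : V₁, φ (A v) = 0} := fun v => hfA v
    have hgcl := h hgmem
    have hclosed : IsClosed {φ : WeakDual ℝ V₂ | φ w = 0} :=
      isClosed_eq (WeakDual.eval_continuous w) continuous_const
    have hsub : {φ : WeakDual ℝ V₂ | ∃ ψ : V₃ →L[ℝ] ℝ, ∀ w' : V₂, φ w' = ψ (B w')} ⊆
        {φ : WeakDual ℝ V₂ | φ w = 0} := by
      rintro φ ⟨ψ, hψ⟩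
      rw [Set.mem_setOf_eq, hψ w, show B w = 0 from hw, map_zero]
    have : g w = 0 := closure_minimal hsub hclosed hgcl
    have : f w = 0 := this
    linarith
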